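/- Exactly one of the following holds: (R) V is irreducible as a complex representation of G; (C) there is an irreducible complex subrepresentation U ⊆ V with V = U ⊕ c(U) as an internal direct sum and U not isomorphic to c(U) as complex representations of G; (Q) there is an irreducible complex subrepresentation U ⊆ V with V = U ⊕ c(U) as an internal direct sum, U isomorphic to c(U) as complex representations of G, and U admits a conjugate-linear G-equivariant bijection σ with σ∘σ = −id_U. -/

import Mathlib

open scoped TensorProduct

/-- The complexified representation `ρ_ℂ(g) = id_ℂ ⊗ ρ(g)` on `V = ℂ ⊗[ℝ] W`. -/
noncomputable def rhoC {G W : Type*} [Group G] [AddCommGroup W] [Module ℝ W]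
    (ρ : G →* (W ≃ₗ[ℝ] W)) (g : G) : (ℂ ⊗[ℝ] W) →ₗ[ℂ] (ℂ ⊗[ℝ] W) :=
  LinearMap.baseChange ℂ (ρ g).toLinearMap

/-- The conjugation `c` on `V = ℂ ⊗[ℝ] W`, determined by `c (z ⊗ w) = conj z ⊗ w`. -/
noncomputable def conjC (W : Type*) [AddCommGroup W] [Module ℝ W] :
    (ℂ ⊗[ℝ] W) →ₗ[ℝ] (ℂ ⊗[ℝ] W) :=
  TensorProduct.map Complex.conjAe.toLinearMap LinearMap.id

/-- A complex subspace of `V = ℂ ⊗[ℝ] W` is a subrepresentation if it is invariant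
under all `ρ_ℂ(g)`. -/
def IsSubrep {G W : Type*} [Group G] [AddCommGroup W] [Module ℝ W]
    (ρ : G →* (W ≃ₗ[ℝ] W)) (p : Submodule ℂ (ℂ ⊗[ℝ] W)) : Prop :=
  ∀ g : G, ∀ x ∈ p, rhoC ρ g x ∈ p

/-- An irreducible subrepresentation: nonzero, invariant, and with no invariant complex
subspaces other than `0` and itself. -/
def IsIrredSubrep {G W : Type*} [Group G] [AddCommGroup W] [Module ℝ W]
    (ρ : G →* (W ≃ₗ[ℝ] W)) (U : Submodule ℂ (ℂ ⊗[ℝ] W)) : Prop :=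
  U ≠ ⊥ ∧ IsSubrep ρ U ∧
    ∀ p : Submodule ℂ (ℂ ⊗[ℝ] W), p ≤ U → IsSubrep ρ p → p = ⊥ ∨ p = U

/-- `U` and `U'` are isomorphic as complex representations of `G`. -/
def SubrepIso {G W : Type*} [Group G] [AddCommGroup W] [Module ℝ W]
    (ρ : G →* (W ≃ₗ[ℝ] W)) (U U' : Submodule ℂ (ℂ ⊗[ℝ] W)) : Prop :=
  ∃ e : U ≃ₗ[ℂ] U', ∀ (g : G) (u : U) (hu : rhoC ρ g (u : ℂ ⊗[ℝ] W) ∈ U),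
    ((e ⟨rhoC ρ g (u : ℂ ⊗[ℝ] W), hu⟩ : U') : ℂ ⊗[ℝ] W) = rhoC ρ g ((e u : U') : ℂ ⊗[ℝ] W)

/-- Case (R): `V` is irreducible as a complex representation of `G`. -/
def CaseR {G W : Type*} [Group G] [AddCommGroup W] [Module ℝ W]
    (ρ : G →* (W ≃ₗ[ℝ] W)) : Prop :=
  ∀ p : Submodule ℂ (ℂ ⊗[ℝ] W), IsSubrep ρ p → p = ⊥ ∨ p = ⊤

/-- Case (C): `V = U ⊕ c(U)` with `U` irreducible and `U ≄ c(U)` as `G`-representations. -/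
def CaseC {G W : Type*} [Group G] [AddCommGroup W] [Module ℝ W]
    (ρ : G →* (W ≃ₗ[ℝ] W)) : Prop :=
  ∃ U U' : Submodule ℂ (ℂ ⊗[ℝ] W), IsIrredSubrep ρ U ∧
    (U' : Set (ℂ ⊗[ℝ] W)) = conjC W '' (U : Set (ℂ ⊗[ℝ] W)) ∧
    U ⊓ U' = ⊥ ∧ U ⊔ U' = ⊤ ∧ ¬ SubrepIso ρ U U'

/-- Case (Q): `V = U ⊕ c(U)` with `U` irreducible, `U ≅ c(U)` as `G`-representations, and
`U` carries a conjugate-linear `G`-equivariant bijection `σ` with `σ ∘ σ = -id`. -/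
def CaseQ {G W : Type*} [Group G] [AddCommGroup W] [Module ℝ W]
    (ρ : G →* (W ≃ₗ[ℝ] W)) : Prop :=
  ∃ U U' : Submodule ℂ (ℂ ⊗[ℝ] W), IsIrredSubrep ρ U ∧
    (U' : Set (ℂ ⊗[ℝ] W)) = conjC W '' (U : Set (ℂ ⊗[ℝ] W)) ∧
    U ⊓ U' = ⊥ ∧ U ⊔ U' = ⊤ ∧ SubrepIso ρ U U' ∧
    ∃ σ : U → U,
      (∀ a b : U, σ (a + b) = σ a + σ b) ∧
      (∀ (c : ℂ) (u : U), σ (c • u) = (starRingEnd ℂ) c • σ u) ∧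
      Function.Bijective σ ∧
      (∀ (g : G) (u : U) (hu : rhoC ρ g (u : ℂ ⊗[ℝ] W) ∈ U),
        ((σ ⟨rhoC ρ g (u : ℂ ⊗[ℝ] W), hu⟩ : U) : ℂ ⊗[ℝ] W) =
          rhoC ρ g ((σ u : U) : ℂ ⊗[ℝ] W)) ∧
      (∀ u : U, σ (σ u) = -u)


section Basics
variable {G W : Type*} [Group G] [AddCommGroup W] [Module ℝ W] (ρ : G →* (W ≃ₗ[ℝ] W))

lemma rhoC_tmul (g : G) (z : ℂ) (w : W) : rhoC ρ g (z ⊗ₜ[ℝ] w) = z ⊗ₜ[ℝ] (ρ g w) := rfl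

lemma conjC_tmul (z : ℂ) (w : W) : conjC W (z ⊗ₜ[ℝ] w) = (starRingEnd ℂ z) ⊗ₜ[ℝ] w := rfl

lemma conjC_conjC (x : ℂ ⊗[ℝ] W) : conjC W (conjC W x) = x := by
  induction x using TensorProduct.induction_on with
  | zero => simp
  | tmul z w => simp [conjC_tmul]
  | add a b ha hb => simp [map_add, ha, hb]

lemma conjC_smul (z : ℂ) (x : ℂ ⊗[ℝ] W) :
    conjC W (z • x) = (starRingEnd ℂ z) • conjC W x := by
  induction x using TensorProduct.induction_on with
  | zero => simp
  | tmul z' w =>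
    rw [TensorProduct.smul_tmul', conjC_tmul, conjC_tmul, TensorProduct.smul_tmul']
    simp [map_mul]
  | add a b ha hb => simp [map_add, smul_add, ha, hb]

lemma conjC_rhoC (g : G) (x : ℂ ⊗[ℝ] W) :
    conjC W (rhoC ρ g x) = rhoC ρ g (conjC W x) := by
  induction x using TensorProduct.induction_on with
  | zero => simp
  | tmul z w => rw [rhoC_tmul, conjC_tmul, conjC_tmul, rhoC_tmul]
  | add a b ha hb => simp [map_add, ha, hb]

lemma conjC_injective : Function.Injective (conjC W) :=
  Function.LeftInverse.injective conjC_conjC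

lemma rhoC_rhoC (g h : G) (x : ℂ ⊗[ℝ] W) :
    rhoC ρ g (rhoC ρ h x) = rhoC ρ (g * h) x := by
  induction x using TensorProduct.induction_on with
  | zero => simp
  | tmul z w => rw [rhoC_tmul, rhoC_tmul, rhoC_tmul, map_mul]; rfl
  | add a b ha hb => simp [map_add, ha, hb]

lemma rhoC_inv_rhoC (g : G) (x : ℂ ⊗[ℝ] W) : rhoC ρ g⁻¹ (rhoC ρ g x) = x := by
  rw [rhoC_rhoC, inv_mul_cancel]
  induction x using TensorProduct.induction_on with
  | zero => simp
  | tmul z w => rw [rhoC_tmul, map_one]; rfl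
  | add a b ha hb => simp [map_add, ha, hb]

noncomputable def reT (W : Type*) [AddCommGroup W] [Module ℝ W] : (ℂ ⊗[ℝ] W) →ₗ[ℝ] W :=
  TensorProduct.lift ((LinearMap.lsmul ℝ W).comp Complex.reLm)

noncomputable def imT (W : Type*) [AddCommGroup W] [Module ℝ W] : (ℂ ⊗[ℝ] W) →ₗ[ℝ] W :=
  TensorProduct.lift ((LinearMap.lsmul ℝ W).comp Complex.imLm)

lemma reT_tmul (z : ℂ) (w : W) : reT W (z ⊗ₜ[ℝ] w) = z.re • w := rfl
lemma imT_tmul (z : ℂ) (w : W) : imT W (z ⊗ₜ[ℝ] w) = z.im • w := rfl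

lemma re_add_im_eq (x : ℂ ⊗[ℝ] W) :
    (1:ℂ) ⊗ₜ[ℝ] (reT W x) + Complex.I ⊗ₜ[ℝ] (imT W x) = x := by
  induction x using TensorProduct.induction_on with
  | zero => simp
  | tmul z w =>
    simp only [reT, imT, TensorProduct.lift.tmul, LinearMap.comp_apply, LinearMap.lsmul_apply,
      Complex.reLm_coe, Complex.imLm_coe, TensorProduct.tmul_smul]
    rw [TensorProduct.smul_tmul', TensorProduct.smul_tmul', ← TensorProduct.add_tmul]
    norm_num [Complex.real_smul, Complex.re_add_im]
  | add a b ha hb =>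
    rw [map_add, map_add, TensorProduct.tmul_add, TensorProduct.tmul_add]
    rw [show (1:ℂ) ⊗ₜ[ℝ] reT W a + 1 ⊗ₜ[ℝ] reT W b
        + (Complex.I ⊗ₜ[ℝ] imT W a + Complex.I ⊗ₜ[ℝ] imT W b)
      = (1 ⊗ₜ[ℝ] reT W a + Complex.I ⊗ₜ[ℝ] imT W a)
        + (1 ⊗ₜ[ℝ] reT W b + Complex.I ⊗ₜ[ℝ] imT W b) by abel, ha, hb]

lemma reT_conjC (x : ℂ ⊗[ℝ] W) : reT W (conjC W x) = reT W x := by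
  induction x using TensorProduct.induction_on with
  | zero => simp
  | tmul z w => simp [conjC_tmul, reT_tmul]
  | add a b ha hb => simp [map_add, ha, hb]

lemma imT_conjC (x : ℂ ⊗[ℝ] W) : imT W (conjC W x) = - imT W x := by
  induction x using TensorProduct.induction_on with
  | zero => simp
  | tmul z w => simp [conjC_tmul, imT_tmul]
  | add a b ha hb => simp [map_add, ha, hb]; abel

lemma reT_rhoC (g : G) (x : ℂ ⊗[ℝ] W) : reT W (rhoC ρ g x) = ρ g (reT W x) := by
  induction x using TensorProduct.induction_on with
  | zero => simp
  | tmul z w => simp [rhoC_tmul, reT_tmul, map_smul]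
  | add a b ha hb => simp [map_add, ha, hb]

lemma imT_rhoC (g : G) (x : ℂ ⊗[ℝ] W) : imT W (rhoC ρ g x) = ρ g (imT W x) := by
  induction x using TensorProduct.induction_on with
  | zero => simp
  | tmul z w => simp [rhoC_tmul, imT_tmul, map_smul]
  | add a b ha hb => simp [map_add, ha, hb]

lemma eq_zero_of_re_im (x : ℂ ⊗[ℝ] W) (h1 : reT W x = 0) (h2 : imT W x = 0) : x = 0 := by
  rw [← re_add_im_eq x, h1, h2]; simp

end Basics

section CSub
variable {G W : Type*} [Group G] [AddCommGroup W] [Module ℝ W] (ρ : G →* (W ≃ₗ[ℝ] W))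

/-- The image of a complex submodule under `conjC`, as a complex submodule. -/
noncomputable def cSub (U : Submodule ℂ (ℂ ⊗[ℝ] W)) : Submodule ℂ (ℂ ⊗[ℝ] W) where
  carrier := conjC W '' (U : Set (ℂ ⊗[ℝ] W))
  add_mem' := by
    rintro _ _ ⟨a, ha, rfl⟩ ⟨b, hb, rfl⟩
    exact ⟨a + b, U.add_mem ha hb, map_add _ _ _⟩
  zero_mem' := ⟨0, U.zero_mem, map_zero _⟩
  smul_mem' := by
    rintro c _ ⟨a, ha, rfl⟩
    refine ⟨starRingEnd ℂ c • a, U.smul_mem _ ha, ?_⟩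
    rw [conjC_smul]; simp

lemma cSub_coe (U : Submodule ℂ (ℂ ⊗[ℝ] W)) :
    ((cSub U : Submodule ℂ (ℂ ⊗[ℝ] W)) : Set (ℂ ⊗[ℝ] W)) = conjC W '' (U : Set (ℂ ⊗[ℝ] W)) := rfl

lemma mem_cSub {U : Submodule ℂ (ℂ ⊗[ℝ] W)} {x : ℂ ⊗[ℝ] W} :
    x ∈ cSub U ↔ conjC W x ∈ U := by
  constructor
  · rintro ⟨a, ha, rfl⟩; rwa [conjC_conjC]
  · intro h; exact ⟨conjC W x, h, conjC_conjC x⟩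

lemma cSub_cSub (U : Submodule ℂ (ℂ ⊗[ℝ] W)) : cSub (cSub U) = U := by
  ext x; rw [mem_cSub, mem_cSub, conjC_conjC]

lemma cSub_ne_bot {U : Submodule ℂ (ℂ ⊗[ℝ] W)} (h : U ≠ ⊥) : cSub U ≠ ⊥ := by
  intro hc
  apply h
  rw [Submodule.eq_bot_iff] at hc ⊢
  intro x hx
  have : conjC W x ∈ cSub U := mem_cSub.mpr (by rwa [conjC_conjC])
  have := hc _ this
  have := congrArg (conjC W) this
  rwa [conjC_conjC, map_zero] at this

lemma cSub_subrep {U : Submodule ℂ (ℂ ⊗[ℝ] W)} (h : IsSubrep ρ U) : IsSubrep ρ (cSub U) := by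
  intro g x hx
  rw [mem_cSub] at hx ⊢
  rw [conjC_rhoC]
  exact h g _ hx

lemma cSub_le_cSub {U p : Submodule ℂ (ℂ ⊗[ℝ] W)} (h : p ≤ U) : cSub p ≤ cSub U := by
  intro x hx
  rw [mem_cSub] at hx ⊢
  exact h hx

lemma cSub_irred {U : Submodule ℂ (ℂ ⊗[ℝ] W)} (h : IsIrredSubrep ρ U) :
    IsIrredSubrep ρ (cSub U) := by
  refine ⟨cSub_ne_bot h.1, cSub_subrep ρ h.2.1, ?_⟩
  intro p hp hps
  have h2 : cSub p ≤ U := by rw [← cSub_cSub U]; exact cSub_le_cSub hp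
  rcases h.2.2 (cSub p) h2 (cSub_subrep ρ hps) with h3 | h3
  · left; rw [← cSub_cSub p, h3]
    ext x; rw [mem_cSub]
    simp only [Submodule.mem_bot]
    exact ⟨fun h => conjC_injective (by simpa using h), fun h => by simp [h]⟩
  · right; rw [← cSub_cSub p, h3]

end CSub

section SelfConj
variable {G W : Type*} [Group G] [AddCommGroup W] [Module ℝ W] (ρ : G →* (W ≃ₗ[ℝ] W))

/-- real points of a self-conjugate invariant subspace give an invariant real subspace -/
lemma selfconj_bot_or_top
    (hirr : ∀ p : Submodule ℝ W, (∀ g : G, ∀ x ∈ p, ρ g x ∈ p) → p = ⊥ ∨ p = ⊤)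
    (U : Submodule ℂ (ℂ ⊗[ℝ] W)) (hsub : IsSubrep ρ U)
    (hc : ∀ x ∈ U, conjC W x ∈ U) : U = ⊥ ∨ U = ⊤ := by
  classical
  set p : Submodule ℝ W :=
    { carrier := {w : W | (1:ℂ) ⊗ₜ[ℝ] w ∈ U}
      add_mem' := by
        intro a b ha hb
        simp only [Set.mem_setOf_eq] at *
        rw [TensorProduct.tmul_add]
        exact U.add_mem ha hb
      zero_mem' := by simp only [Set.mem_setOf_eq, TensorProduct.tmul_zero]; exact U.zero_mem
      smul_mem' := by
        intro r w hw
        simp only [Set.mem_setOf_eq] at *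
        rw [TensorProduct.tmul_smul]
        have : (r : ℝ) • ((1:ℂ) ⊗ₜ[ℝ] w) = (algebraMap ℝ ℂ r) • ((1:ℂ) ⊗ₜ[ℝ] w) :=
          (algebraMap_smul ℂ r _).symm
        rw [this]
        exact U.smul_mem _ hw } with hp
  have hmem1 : ∀ w : W, w ∈ p ↔ (1:ℂ) ⊗ₜ[ℝ] w ∈ U := fun w => Iff.rfl
  have hpinv : ∀ g : G, ∀ w ∈ p, ρ g w ∈ p := by
    intro g w hw
    rw [hmem1] at *
    have : (1:ℂ) ⊗ₜ[ℝ] (ρ g w) = rhoC ρ g ((1:ℂ) ⊗ₜ[ℝ] w) := (rhoC_tmul ρ g 1 w).symm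
    rw [this]
    exact hsub g _ hw
  -- key: for x ∈ U, reT x ∈ p and imT x ∈ p
  have hkey : ∀ x ∈ U, reT W x ∈ p ∧ imT W x ∈ p := by
    intro x hx
    have hcx := hc x hx
    have hdx := re_add_im_eq (W := W) x
    have hdcx := re_add_im_eq (W := W) (conjC W x)
    rw [reT_conjC, imT_conjC] at hdcx
    set r := reT W x with hr
    set i := imT W x with hi
    constructor
    · rw [hmem1]
      have h2 : x + conjC W x = (2:ℂ) • ((1:ℂ) ⊗ₜ[ℝ] r) := by
        rw [← hdcx, ← hdx]
        rw [TensorProduct.smul_tmul']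
        rw [TensorProduct.tmul_neg]
        rw [show ((2:ℂ) • (1:ℂ)) = ((1:ℂ) + 1) by norm_num]
        rw [TensorProduct.add_tmul]
        abel
      have : ((2:ℂ)⁻¹) • (x + conjC W x) ∈ U := U.smul_mem _ (U.add_mem hx hcx)
      rwa [h2, smul_smul, show ((2:ℂ)⁻¹ * 2) = 1 by norm_num, one_smul] at this
    · rw [hmem1]
      have h2 : x - conjC W x = (2 * Complex.I) • ((1:ℂ) ⊗ₜ[ℝ] i) := by
        rw [← hdcx, ← hdx]
        rw [TensorProduct.smul_tmul']
        rw [TensorProduct.tmul_neg]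
        rw [show ((2 * Complex.I) • (1:ℂ)) = Complex.I + Complex.I by
          simp [smul_eq_mul]; ring]
        rw [TensorProduct.add_tmul]
        abel
      have hne : (2 * Complex.I) ≠ 0 := by simp [Complex.I_ne_zero]
      have : ((2 * Complex.I)⁻¹) • (x - conjC W x) ∈ U := U.smul_mem _ (U.sub_mem hx hcx)
      rwa [h2, smul_smul, inv_mul_cancel₀ hne, one_smul] at this
  rcases hirr p hpinv with hbot | htop
  · left
    rw [Submodule.eq_bot_iff]
    intro x hx
    have := hkey x hx
    rw [hbot, Submodule.mem_bot] at this
    exact eq_zero_of_re_im x this.1 this.2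
  · right
    rw [Submodule.eq_top_iff']
    intro x
    have h1 : (1:ℂ) ⊗ₜ[ℝ] reT W x ∈ U := by
      have : reT W x ∈ p := htop ▸ Submodule.mem_top
      rwa [hmem1] at this
    have h2 : (1:ℂ) ⊗ₜ[ℝ] imT W x ∈ U := by
      have : imT W x ∈ p := htop ▸ Submodule.mem_top
      rwa [hmem1] at this
    have h3 : Complex.I ⊗ₜ[ℝ] imT W x = Complex.I • ((1:ℂ) ⊗ₜ[ℝ] imT W x) := by
      rw [TensorProduct.smul_tmul']; norm_num
    rw [← re_add_im_eq (W := W) x, h3]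
    exact U.add_mem h1 (U.smul_mem _ h2)

end SelfConj

section Irred
variable {G W : Type*} [Group G] [AddCommGroup W] [Module ℝ W] [FiniteDimensional ℝ W]
  (ρ : G →* (W ≃ₗ[ℝ] W))

lemma exists_irred_aux (n : ℕ) :
    ∀ p : Submodule ℂ (ℂ ⊗[ℝ] W), Module.finrank ℂ p ≤ n → IsSubrep ρ p → p ≠ ⊥ →
      ∃ U : Submodule ℂ (ℂ ⊗[ℝ] W), U ≤ p ∧ IsIrredSubrep ρ U := by
  induction n with
  | zero =>
    intro p hrank hsub hne
    exfalso
    apply hne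
    have : Module.finrank ℂ p = 0 := Nat.le_zero.mp hrank
    exact Submodule.finrank_eq_zero.mp this
  | succ n ih =>
    intro p hrank hsub hne
    by_cases hirr : ∀ q : Submodule ℂ (ℂ ⊗[ℝ] W), q ≤ p → IsSubrep ρ q → q = ⊥ ∨ q = p
    · exact ⟨p, le_refl p, hne, hsub, hirr⟩
    · push_neg at hirr
      obtain ⟨q, hqp, hqsub, hqbot, hqne⟩ := hirr
      have hlt : q < p := lt_of_le_of_ne hqp hqne
      have : Module.finrank ℂ q < Module.finrank ℂ p := Submodule.finrank_lt_finrank_of_lt hlt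
      obtain ⟨U, hUq, hU⟩ := ih q (by omega) hqsub hqbot
      exact ⟨U, le_trans hUq hqp, hU⟩

lemma exists_irred (p : Submodule ℂ (ℂ ⊗[ℝ] W)) (hsub : IsSubrep ρ p) (hne : p ≠ ⊥) :
    ∃ U : Submodule ℂ (ℂ ⊗[ℝ] W), U ≤ p ∧ IsIrredSubrep ρ U :=
  exists_irred_aux ρ (Module.finrank ℂ p) p le_rfl hsub hne

/-- Schur: a `G`-equivariant complex endomorphism of an irreducible subrep is scalar. -/
lemma schur_scalar (U : Submodule ℂ (ℂ ⊗[ℝ] W)) (hU : IsIrredSubrep ρ U)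
    (f : U →ₗ[ℂ] U)
    (hf : ∀ (g : G) (u : U) (hu : rhoC ρ g (u : ℂ ⊗[ℝ] W) ∈ U),
      ((f ⟨rhoC ρ g (u : ℂ ⊗[ℝ] W), hu⟩ : U) : ℂ ⊗[ℝ] W) = rhoC ρ g ((f u : U) : ℂ ⊗[ℝ] W)) :
    ∃ lam : ℂ, ∀ u : U, f u = lam • u := by
  have : Nontrivial U := Submodule.nontrivial_iff_ne_bot.mpr hU.1
  obtain ⟨lam, hlam⟩ := Module.End.exists_eigenvalue (f : Module.End ℂ U)
  refine ⟨lam, ?_⟩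
  set K : Submodule ℂ U := Module.End.eigenspace (f : Module.End ℂ U) lam with hK
  have hKne : K ≠ ⊥ := hlam
  set Ksub : Submodule ℂ (ℂ ⊗[ℝ] W) := K.map U.subtype with hKsub
  have hKmem : ∀ x : ℂ ⊗[ℝ] W, x ∈ Ksub ↔ ∃ hu : x ∈ U, f ⟨x, hu⟩ = lam • ⟨x, hu⟩ := by
    intro x
    constructor
    · rintro ⟨⟨y, hy⟩, hyK, rfl⟩
      refine ⟨hy, ?_⟩
      have := Module.End.mem_eigenspace_iff.mp hyK
      simpa using this
    · rintro ⟨hu, hfu⟩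
      exact ⟨⟨x, hu⟩, Module.End.mem_eigenspace_iff.mpr (by simpa using hfu), rfl⟩
  have hKsub_le : Ksub ≤ U := by
    rintro x ⟨y, hy, rfl⟩; exact y.2
  have hKsub_inv : IsSubrep ρ Ksub := by
    intro g x hx
    rw [hKmem] at hx
    obtain ⟨hu, hfu⟩ := hx
    have hu2 : rhoC ρ g x ∈ U := hU.2.1 g x hu
    rw [hKmem]
    refine ⟨hu2, ?_⟩
    apply Subtype.ext
    have h1 := hf g ⟨x, hu⟩ hu2
    rw [h1, hfu]
    simp [map_smul]
  have hKsub_ne : Ksub ≠ ⊥ := by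
    intro hbot
    apply hKne
    rw [Submodule.eq_bot_iff] at hbot ⊢
    intro y hy
    have : (y : ℂ ⊗[ℝ] W) ∈ Ksub := ⟨y, hy, rfl⟩
    have := hbot _ this
    exact Subtype.ext this
  rcases hU.2.2 Ksub hKsub_le hKsub_inv with hbot | htop
  · exact absurd hbot hKsub_ne
  · intro u
    have : (u : ℂ ⊗[ℝ] W) ∈ Ksub := by rw [htop]; exact u.2
    rw [hKmem] at this
    obtain ⟨hu, hfu⟩ := this
    have : (⟨(u : ℂ ⊗[ℝ] W), hu⟩ : U) = u := Subtype.ext rfl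
    rwa [this] at hfu

end Irred

section Proj
variable {G W : Type*} [Group G] [AddCommGroup W] [Module ℝ W]
  (ρ : G →* (W ≃ₗ[ℝ] W))

lemma isCompl_of_inf_sup {U U' : Submodule ℂ (ℂ ⊗[ℝ] W)} (hinf : U ⊓ U' = ⊥)
    (hsup : U ⊔ U' = ⊤) : IsCompl U U' :=
  ⟨disjoint_iff.mpr hinf, codisjoint_iff.mpr hsup⟩

/-- the projection onto `U` along `U'`, as a map `V →ₗ[ℂ] V`, is `G`-equivariant. -/
lemma proj_equivariant {U U' : Submodule ℂ (ℂ ⊗[ℝ] W)} (h : IsCompl U U')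
    (hU : IsSubrep ρ U) (hU' : IsSubrep ρ U') (g : G) (x : ℂ ⊗[ℝ] W) :
    (U.subtype.comp (U.linearProjOfIsCompl U' h)) (rhoC ρ g x)
      = rhoC ρ g ((U.subtype.comp (U.linearProjOfIsCompl U' h)) x) := by
  set π := U.subtype.comp (U.linearProjOfIsCompl U' h) with hπ
  have hmemU : ∀ y, π y ∈ U := fun y => (U.linearProjOfIsCompl U' h y).2
  have hmemU' : ∀ y, y - π y ∈ U' := by
    intro y
    have h1 := Submodule.projection_add_projection_eq_self h y
    have : y - π y = (U'.linearProjOfIsCompl U h.symm y : ℂ ⊗[ℝ] W) := by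
      rw [hπ]; simp only [LinearMap.comp_apply, Submodule.subtype_apply]
      rw [sub_eq_iff_eq_add']
      exact h1.symm
    rw [this]
    exact (U'.linearProjOfIsCompl U h.symm y).2
  have hd : π (rhoC ρ g x) - rhoC ρ g (π x) ∈ U := by
    exact U.sub_mem (hmemU _) (hU g _ (hmemU x))
  have hd' : π (rhoC ρ g x) - rhoC ρ g (π x) ∈ U' := by
    have h1 : rhoC ρ g x - π (rhoC ρ g x) ∈ U' := hmemU' _
    have h2 : rhoC ρ g x - rhoC ρ g (π x) ∈ U' := by
      have := hU' g _ (hmemU' x)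
      rwa [map_sub] at this
    have : π (rhoC ρ g x) - rhoC ρ g (π x)
        = (rhoC ρ g x - rhoC ρ g (π x)) - (rhoC ρ g x - π (rhoC ρ g x)) := by abel
    rw [this]
    exact U'.sub_mem h2 h1
  have : π (rhoC ρ g x) - rhoC ρ g (π x) ∈ U ⊓ U' := ⟨hd, hd'⟩
  rw [h.inf_eq_bot, Submodule.mem_bot, sub_eq_zero] at this
  exact this

lemma proj_mem {U U' : Submodule ℂ (ℂ ⊗[ℝ] W)} (h : IsCompl U U') (x : ℂ ⊗[ℝ] W) :
    (U.subtype.comp (U.linearProjOfIsCompl U' h)) x ∈ U :=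
  (U.linearProjOfIsCompl U' h x).2

lemma proj_apply_right {U U' : Submodule ℂ (ℂ ⊗[ℝ] W)} (h : IsCompl U U') {x : ℂ ⊗[ℝ] W}
    (hx : x ∈ U') : (U.subtype.comp (U.linearProjOfIsCompl U' h)) x = 0 := by
  exact congrArg Subtype.val (Submodule.projectionOnto_apply_of_mem_right h hx)

lemma proj_apply_left {U U' : Submodule ℂ (ℂ ⊗[ℝ] W)} (h : IsCompl U U') {x : ℂ ⊗[ℝ] W}
    (hx : x ∈ U) : (U.subtype.comp (U.linearProjOfIsCompl U' h)) x = x := by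
  have := Submodule.projectionOnto_apply_of_mem_left h hx
  simp only [LinearMap.comp_apply, Submodule.subtype_apply]
  exact congrArg Subtype.val this

/-- A `G`-map restricted to an irreducible subrep is zero or gives an iso onto another. -/
lemma hom_zero_or_iso (U U₂ : Submodule ℂ (ℂ ⊗[ℝ] W)) (hU : IsIrredSubrep ρ U)
    (hU₂ : IsIrredSubrep ρ U₂) (f : (ℂ ⊗[ℝ] W) →ₗ[ℂ] (ℂ ⊗[ℝ] W))
    (hcomm : ∀ (g : G) (x : ℂ ⊗[ℝ] W), f (rhoC ρ g x) = rhoC ρ g (f x))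
    (hmap : ∀ x ∈ U₂, f x ∈ U) :
    (∀ x ∈ U₂, f x = 0) ∨ SubrepIso ρ U₂ U := by
  classical
  set im : Submodule ℂ (ℂ ⊗[ℝ] W) := U₂.map f with him
  have him_le : im ≤ U := by rintro _ ⟨x, hx, rfl⟩; exact hmap x hx
  have him_inv : IsSubrep ρ im := by
    rintro g _ ⟨x, hx, rfl⟩
    exact ⟨rhoC ρ g x, hU₂.2.1 g x hx, hcomm g x⟩
  rcases hU.2.2 im him_le him_inv with hbot | htop
  · left
    intro x hx
    have : f x ∈ im := ⟨x, hx, rfl⟩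
    rwa [hbot, Submodule.mem_bot] at this
  · right
    set ker' : Submodule ℂ (ℂ ⊗[ℝ] W) := U₂ ⊓ LinearMap.ker f with hker
    have hker_le : ker' ≤ U₂ := inf_le_left
    have hker_inv : IsSubrep ρ ker' := by
      intro g x hx
      obtain ⟨hx1, hx2⟩ := Submodule.mem_inf.mp hx
      refine Submodule.mem_inf.mpr ⟨hU₂.2.1 g x hx1, ?_⟩
      rw [LinearMap.mem_ker] at hx2 ⊢
      rw [hcomm, hx2, map_zero]
    have hker_bot : ker' = ⊥ := by
      rcases hU₂.2.2 ker' hker_le hker_inv with hb | ht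
      · exact hb
      · exfalso
        apply hU.1
        rw [← htop, Submodule.eq_bot_iff]
        rintro _ ⟨x, hx, rfl⟩
        have : x ∈ ker' := ht ▸ hx
        exact (Submodule.mem_inf.mp this).2
    set f₀ : U₂ →ₗ[ℂ] U := f.restrict hmap with hf₀
    have hbij : Function.Bijective f₀ := by
      constructor
      · intro a b hab
        have : f ((a : ℂ ⊗[ℝ] W) - b) = 0 := by
          rw [map_sub, sub_eq_zero]
          exact congrArg (Subtype.val) hab
        have hm : ((a : ℂ ⊗[ℝ] W) - b) ∈ ker' :=
          Submodule.mem_inf.mpr ⟨U₂.sub_mem a.2 b.2, LinearMap.mem_ker.mpr this⟩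
        rw [hker_bot, Submodule.mem_bot, sub_eq_zero] at hm
        exact Subtype.ext hm
      · intro y
        have : (y : ℂ ⊗[ℝ] W) ∈ im := htop ▸ y.2
        obtain ⟨x, hx, hfx⟩ := this
        exact ⟨⟨x, hx⟩, Subtype.ext hfx⟩
    set e := LinearEquiv.ofBijective f₀ hbij with he
    refine ⟨e, ?_⟩
    intro g u hu
    have h1 : ∀ v : U₂, ((e v : U) : ℂ ⊗[ℝ] W) = f (v : ℂ ⊗[ℝ] W) := fun v => rfl
    rw [h1, h1]
    exact hcomm g u

end Proj

section IsoUtil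
variable {G W : Type*} [Group G] [AddCommGroup W] [Module ℝ W] (ρ : G →* (W ≃ₗ[ℝ] W))

lemma coe_e_congr {U U₂ : Submodule ℂ (ℂ ⊗[ℝ] W)} (e : U ≃ₗ[ℂ] U₂) {a a' : ℂ ⊗[ℝ] W}
    (h : a = a') (ha : a ∈ U) (ha' : a' ∈ U) :
    ((e ⟨a, ha⟩ : U₂) : ℂ ⊗[ℝ] W) = ((e ⟨a', ha'⟩ : U₂) : ℂ ⊗[ℝ] W) := by
  cases h; rfl

lemma subrepIso_refl (U : Submodule ℂ (ℂ ⊗[ℝ] W)) : SubrepIso ρ U U :=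
  ⟨LinearEquiv.refl ℂ U, fun g u hu => rfl⟩

lemma subrepIso_symm {U U' : Submodule ℂ (ℂ ⊗[ℝ] W)} (hU : IsSubrep ρ U)
    (h : SubrepIso ρ U U') : SubrepIso ρ U' U := by
  obtain ⟨e, he⟩ := h
  refine ⟨e.symm, ?_⟩
  intro g u' hu'
  set a := e.symm u' with ha0
  have ha : e a = u' := e.apply_symm_apply u'
  have hmem : rhoC ρ g (a : ℂ ⊗[ℝ] W) ∈ U := hU g _ a.2
  have h1 : ((e ⟨rhoC ρ g (a : ℂ ⊗[ℝ] W), hmem⟩ : U') : ℂ ⊗[ℝ] W)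
      = rhoC ρ g ((e a : U') : ℂ ⊗[ℝ] W) := he g a hmem
  rw [ha] at h1
  have h2 : (⟨rhoC ρ g ((u' : ℂ ⊗[ℝ] W)), hu'⟩ : U') = e ⟨rhoC ρ g (a : ℂ ⊗[ℝ] W), hmem⟩ :=
    Subtype.ext h1.symm
  have h3 : e.symm ⟨rhoC ρ g ((u' : ℂ ⊗[ℝ] W)), hu'⟩ = ⟨rhoC ρ g (a : ℂ ⊗[ℝ] W), hmem⟩ := by
    rw [h2, e.symm_apply_apply]
  rw [h3]


lemma subrepIso_trans {U U' U'' : Submodule ℂ (ℂ ⊗[ℝ] W)}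
    (h1 : SubrepIso ρ U U') (h2 : SubrepIso ρ U' U'') : SubrepIso ρ U U'' := by
  obtain ⟨e₁, he₁⟩ := h1
  obtain ⟨e₂, he₂⟩ := h2
  refine ⟨e₁.trans e₂, ?_⟩
  intro g u hu
  have ha := he₁ g u hu
  have hmem : rhoC ρ g ((e₁ u : U') : ℂ ⊗[ℝ] W) ∈ U' := by
    rw [← ha]; exact (e₁ ⟨rhoC ρ g (u : ℂ ⊗[ℝ] W), hu⟩).2
  have h4 : e₁ ⟨rhoC ρ g ((u : ℂ ⊗[ℝ] W)), hu⟩ = ⟨rhoC ρ g ((e₁ u : U') : ℂ ⊗[ℝ] W), hmem⟩ :=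
    Subtype.ext ha
  have h5 := he₂ g (e₁ u) hmem
  show ((e₂ (e₁ ⟨rhoC ρ g ((u : ℂ ⊗[ℝ] W)), hu⟩) : U'') : ℂ ⊗[ℝ] W)
      = rhoC ρ g ((e₂ (e₁ u) : U'') : ℂ ⊗[ℝ] W)
  rw [h4, h5]

/-- transporting an iso through conjugation -/
lemma subrepIso_cSub {U U₂ : Submodule ℂ (ℂ ⊗[ℝ] W)} (h : SubrepIso ρ U U₂) :
    SubrepIso ρ (cSub U) (cSub U₂) := by
  classical
  obtain ⟨e, he⟩ := h
  have memU : ∀ x : cSub U, conjC W (x : ℂ ⊗[ℝ] W) ∈ U := fun x => mem_cSub.mp x.2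
  have memU₂ : ∀ y : U₂, conjC W (y : ℂ ⊗[ℝ] W) ∈ cSub U₂ := fun y =>
    mem_cSub.mpr (by rw [conjC_conjC]; exact y.2)
  have memU' : ∀ y : cSub U₂, conjC W (y : ℂ ⊗[ℝ] W) ∈ U₂ := fun y => mem_cSub.mp y.2
  have memUU : ∀ x : U, conjC W (x : ℂ ⊗[ℝ] W) ∈ cSub U := fun x =>
    mem_cSub.mpr (by rw [conjC_conjC]; exact x.2)
  set F : cSub U → cSub U₂ := fun x =>
    ⟨conjC W ((e ⟨conjC W (x : ℂ ⊗[ℝ] W), memU x⟩ : U₂) : ℂ ⊗[ℝ] W), memU₂ _⟩ with hF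
  set Finv : cSub U₂ → cSub U := fun y =>
    ⟨conjC W ((e.symm ⟨conjC W (y : ℂ ⊗[ℝ] W), memU' y⟩ : U) : ℂ ⊗[ℝ] W), memUU _⟩ with hFinv
  have hFcoe : ∀ (x : cSub U) (hm : conjC W (x : ℂ ⊗[ℝ] W) ∈ U),
      (F x : ℂ ⊗[ℝ] W) = conjC W ((e ⟨conjC W (x : ℂ ⊗[ℝ] W), hm⟩ : U₂) : ℂ ⊗[ℝ] W) :=
    fun x hm => rfl
  have hleft : ∀ x, Finv (F x) = x := by
    intro x
    apply Subtype.ext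
    rw [hFinv]
    simp only
    have harg : (⟨conjC W ((F x : ℂ ⊗[ℝ] W)), memU' (F x)⟩ : U₂)
        = e ⟨conjC W (x : ℂ ⊗[ℝ] W), memU x⟩ := by
      apply Subtype.ext
      show conjC W ((F x : ℂ ⊗[ℝ] W)) = ((e ⟨conjC W (x : ℂ ⊗[ℝ] W), memU x⟩ : U₂) : ℂ ⊗[ℝ] W)
      rw [hFcoe x (memU x), conjC_conjC]
    have h9 : e.symm ⟨conjC W ((F x : ℂ ⊗[ℝ] W)), memU' (F x)⟩
        = ⟨conjC W (x : ℂ ⊗[ℝ] W), memU x⟩ := by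
      rw [harg, e.symm_apply_apply]
    show conjC W ((e.symm ⟨conjC W ((F x : ℂ ⊗[ℝ] W)), memU' (F x)⟩ : U) : ℂ ⊗[ℝ] W) = _
    rw [h9]
    exact conjC_conjC _
  have hright : ∀ y, F (Finv y) = y := by
    intro y
    apply Subtype.ext
    rw [hF]
    simp only
    have harg : (⟨conjC W ((Finv y : ℂ ⊗[ℝ] W)), memU (Finv y)⟩ : U)
        = e.symm ⟨conjC W (y : ℂ ⊗[ℝ] W), memU' y⟩ := by
      apply Subtype.ext
      show conjC W ((Finv y : ℂ ⊗[ℝ] W)) = _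
      rw [hFinv]
      simp only
      rw [conjC_conjC]
    have h9 : e ⟨conjC W ((Finv y : ℂ ⊗[ℝ] W)), memU (Finv y)⟩
        = ⟨conjC W (y : ℂ ⊗[ℝ] W), memU' y⟩ := by
      rw [harg, e.apply_symm_apply]
    show conjC W ((e ⟨conjC W ((Finv y : ℂ ⊗[ℝ] W)), memU (Finv y)⟩ : U₂) : ℂ ⊗[ℝ] W) = _
    rw [h9]
    exact conjC_conjC _
  have hadd : ∀ x y, F (x + y) = F x + F y := by
    intro x y
    apply Subtype.ext
    have hm : conjC W ((x + y : cSub U) : ℂ ⊗[ℝ] W) ∈ U := memU (x + y)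
    rw [hFcoe (x+y) hm]
    have h6 : (⟨conjC W ((x + y : cSub U) : ℂ ⊗[ℝ] W), hm⟩ : U)
        = ⟨conjC W (x : ℂ ⊗[ℝ] W), memU x⟩ + ⟨conjC W (y : ℂ ⊗[ℝ] W), memU y⟩ := by
      apply Subtype.ext
      show conjC W ((x + y : cSub U) : ℂ ⊗[ℝ] W) = _
      rw [Submodule.coe_add, map_add]
      rfl
    rw [h6, map_add]
    show conjC W (((e _ : U₂) : ℂ ⊗[ℝ] W) + ((e _ : U₂) : ℂ ⊗[ℝ] W)) = _
    rw [map_add]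
    rfl
  have hsmul : ∀ (c : ℂ) (x : cSub U), F (c • x) = c • F x := by
    intro c x
    apply Subtype.ext
    have hm : conjC W ((c • x : cSub U) : ℂ ⊗[ℝ] W) ∈ U := memU (c • x)
    rw [hFcoe (c • x) hm]
    have h6 : (⟨conjC W ((c • x : cSub U) : ℂ ⊗[ℝ] W), hm⟩ : U)
        = (starRingEnd ℂ c) • ⟨conjC W (x : ℂ ⊗[ℝ] W), memU x⟩ := by
      apply Subtype.ext
      show conjC W ((c • x : cSub U) : ℂ ⊗[ℝ] W) = _
      rw [Submodule.coe_smul, conjC_smul]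
      rfl
    rw [h6, map_smul]
    show conjC W (((starRingEnd ℂ c) • (e ⟨conjC W (x : ℂ ⊗[ℝ] W), memU x⟩ : U₂) : U₂)
      : ℂ ⊗[ℝ] W) = _
    rw [Submodule.coe_smul, conjC_smul]
    simp only [RingHomCompTriple.comp_apply, Complex.conj_conj]
    rfl
  set E : cSub U ≃ₗ[ℂ] cSub U₂ :=
    { toFun := F
      map_add' := hadd
      map_smul' := hsmul
      invFun := Finv
      left_inv := hleft
      right_inv := hright } with hE
  refine ⟨E, ?_⟩
  intro g x hx
  show (F ⟨rhoC ρ g (x : ℂ ⊗[ℝ] W), hx⟩ : ℂ ⊗[ℝ] W) = rhoC ρ g ((F x : ℂ ⊗[ℝ] W))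
  have hm1 : conjC W (rhoC ρ g (x : ℂ ⊗[ℝ] W)) ∈ U := memU ⟨rhoC ρ g (x : ℂ ⊗[ℝ] W), hx⟩
  rw [hFcoe _ hm1]
  have hm2 : rhoC ρ g (conjC W (x : ℂ ⊗[ℝ] W)) ∈ U := by
    rw [← conjC_rhoC]; exact hm1
  have h7 : (⟨conjC W (rhoC ρ g (x : ℂ ⊗[ℝ] W)), hm1⟩ : U)
      = ⟨rhoC ρ g (conjC W (x : ℂ ⊗[ℝ] W)), hm2⟩ := Subtype.ext (conjC_rhoC ρ g _)
  rw [h7]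
  have h8 := he g ⟨conjC W (x : ℂ ⊗[ℝ] W), memU x⟩ hm2
  simp only at h8
  rw [h8, ← conjC_rhoC]

end IsoUtil

section Main
variable {G W : Type*} [Group G] [AddCommGroup W] [Module ℝ W] (ρ : G →* (W ≃ₗ[ℝ] W))

lemma nontrivial_V [Nontrivial W] : Nontrivial (ℂ ⊗[ℝ] W) := by
  obtain ⟨w, hw⟩ := exists_ne (0 : W)
  refine ⟨(1:ℂ) ⊗ₜ[ℝ] w, 0, fun h => hw ?_⟩
  have := congrArg (reT W) h
  rw [reT_tmul, map_zero] at this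
  simpa using this

lemma proj_sub_mem {U U' : Submodule ℂ (ℂ ⊗[ℝ] W)} (h : IsCompl U U') (y : ℂ ⊗[ℝ] W) :
    y - (U.subtype.comp (U.linearProjOfIsCompl U' h)) y ∈ U' := by
  have h1 := Submodule.projection_add_projection_eq_self h y
  have h2 : y - (U.subtype.comp (U.linearProjOfIsCompl U' h)) y
      = (U'.linearProjOfIsCompl U h.symm y : ℂ ⊗[ℝ] W) := by
    simp only [LinearMap.comp_apply, Submodule.subtype_apply]
    rw [sub_eq_iff_eq_add']
    exact h1.symm
  rw [h2]
  exact (U'.linearProjOfIsCompl U h.symm y).2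

lemma submodule_eq_cSub {U U' : Submodule ℂ (ℂ ⊗[ℝ] W)}
    (h : (U' : Set (ℂ ⊗[ℝ] W)) = conjC W '' (U : Set (ℂ ⊗[ℝ] W))) : U' = cSub U :=
  SetLike.coe_injective (by rw [h, cSub_coe])

lemma inf_subrep {U U' : Submodule ℂ (ℂ ⊗[ℝ] W)} (hU : IsSubrep ρ U) (hU' : IsSubrep ρ U') :
    IsSubrep ρ (U ⊓ U') := by
  intro g x hx
  obtain ⟨h1, h2⟩ := Submodule.mem_inf.mp hx
  exact Submodule.mem_inf.mpr ⟨hU g x h1, hU' g x h2⟩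

lemma sup_subrep {U U' : Submodule ℂ (ℂ ⊗[ℝ] W)} (hU : IsSubrep ρ U) (hU' : IsSubrep ρ U') :
    IsSubrep ρ (U ⊔ U') := by
  intro g x hx
  obtain ⟨u, hu, v, hv, rfl⟩ := Submodule.mem_sup.mp hx
  rw [map_add]
  exact Submodule.add_mem_sup (hU g u hu) (hU' g v hv)

/-- For an irreducible proper subrep `U`, we get `V = U ⊕ c(U)`. -/
lemma irred_decomp
    (hirr : ∀ p : Submodule ℝ W, (∀ g : G, ∀ x ∈ p, ρ g x ∈ p) → p = ⊥ ∨ p = ⊤)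
    {U : Submodule ℂ (ℂ ⊗[ℝ] W)} (hU : IsIrredSubrep ρ U) (hUne : U ≠ ⊤) :
    U ⊓ cSub U = ⊥ ∧ U ⊔ cSub U = ⊤ := by
  have hc1 : ∀ x ∈ U ⊓ cSub U, conjC W x ∈ U ⊓ cSub U := by
    intro x hx
    obtain ⟨h1, h2⟩ := Submodule.mem_inf.mp hx
    exact Submodule.mem_inf.mpr ⟨mem_cSub.mp h2, mem_cSub.mpr (by rwa [conjC_conjC])⟩
  have hc2 : ∀ x ∈ U ⊔ cSub U, conjC W x ∈ U ⊔ cSub U := by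
    intro x hx
    obtain ⟨u, hu, v, hv, rfl⟩ := Submodule.mem_sup.mp hx
    rw [map_add, add_comm]
    exact Submodule.add_mem_sup (mem_cSub.mp hv) (mem_cSub.mpr (by rwa [conjC_conjC]))
  constructor
  · rcases selfconj_bot_or_top ρ hirr (U ⊓ cSub U)
      (inf_subrep ρ hU.2.1 (cSub_subrep ρ hU.2.1)) hc1 with h | h
    · exact h
    · exfalso
      exact hUne (top_le_iff.mp (h ▸ inf_le_left))
  · rcases selfconj_bot_or_top ρ hirr (U ⊔ cSub U)
      (sup_subrep ρ hU.2.1 (cSub_subrep ρ hU.2.1)) hc2 with h | h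
    · exfalso
      apply hU.1
      rw [← le_bot_iff, ← h]
      exact le_sup_left
    · exact h

lemma exists_irred_proper [FiniteDimensional ℝ W] (h : ¬ CaseR ρ) :
    ∃ U : Submodule ℂ (ℂ ⊗[ℝ] W), IsIrredSubrep ρ U ∧ U ≠ ⊤ := by
  unfold CaseR at h
  push_neg at h
  obtain ⟨p, hp, hpbot, hptop⟩ := h
  obtain ⟨U, hUp, hU⟩ := exists_irred ρ p hp hpbot
  refine ⟨U, hU, fun htop => hptop ?_⟩
  rw [htop] at hUp
  exact top_le_iff.mp hUp

lemma caseR_not_caseC_aux [Nontrivial W] (hR : CaseR ρ) {U U' : Submodule ℂ (ℂ ⊗[ℝ] W)}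
    (hU : IsIrredSubrep ρ U)
    (hset : (U' : Set (ℂ ⊗[ℝ] W)) = conjC W '' (U : Set (ℂ ⊗[ℝ] W)))
    (hinf : U ⊓ U' = ⊥) : False := by
  have : Nontrivial (ℂ ⊗[ℝ] W) := nontrivial_V
  have hU' : U' = cSub U := submodule_eq_cSub hset
  rcases hR U hU.2.1 with hb | ht
  · exact hU.1 hb
  · apply cSub_ne_bot hU.1
    rw [← hU']
    rw [ht, top_inf_eq] at hinf
    exact hinf

lemma not_caseC_and_caseQ [FiniteDimensional ℝ W] : ¬ (CaseC ρ ∧ CaseQ ρ) := by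
  rintro ⟨⟨U₁, U₁', hU₁, hset₁, hinf₁, hsup₁, hniso⟩,
    ⟨U₂, U₂', hU₂, hset₂, hinf₂, hsup₂, hiso₂, _⟩⟩
  have hU₁' : U₁' = cSub U₁ := submodule_eq_cSub hset₁
  have hU₂' : U₂' = cSub U₂ := submodule_eq_cSub hset₂
  rw [hU₁'] at hinf₁ hsup₁ hniso
  rw [hU₂'] at hiso₂
  have hcompl := isCompl_of_inf_sup hinf₁ hsup₁
  set π := U₁.subtype.comp (U₁.linearProjOfIsCompl (cSub U₁) hcompl) with hπ
  have hπcomm : ∀ (g : G) (x : ℂ ⊗[ℝ] W), π (rhoC ρ g x) = rhoC ρ g (π x) :=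
    proj_equivariant ρ hcompl hU₁.2.1 (cSub_subrep ρ hU₁.2.1)
  rcases hom_zero_or_iso ρ U₁ U₂ hU₁ hU₂ π hπcomm
      (fun x _ => proj_mem hcompl x) with hzero | hiso21
  · have hle : U₂ ≤ cSub U₁ := by
      intro x hx
      have h1 := proj_sub_mem hcompl x
      rw [hπ] at hzero
      rw [hzero x hx, sub_zero] at h1
      exact h1
    rcases (cSub_irred ρ hU₁).2.2 U₂ hle hU₂.2.1 with hb | heq
    · exact hU₂.1 hb
    · rw [heq, cSub_cSub] at hiso₂
      exact hniso (subrepIso_symm ρ (cSub_subrep ρ hU₁.2.1) hiso₂)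
  · apply hniso
    have h1 : SubrepIso ρ U₁ U₂ := subrepIso_symm ρ hU₂.2.1 hiso21
    have h2 : SubrepIso ρ (cSub U₂) (cSub U₁) := subrepIso_cSub ρ hiso21
    exact subrepIso_trans ρ (subrepIso_trans ρ h1 hiso₂) h2

set_option maxHeartbeats 1600000 in
lemma caseC_or_caseQ [FiniteDimensional ℝ W]
    (hirr : ∀ p : Submodule ℝ W, (∀ g : G, ∀ x ∈ p, ρ g x ∈ p) → p = ⊥ ∨ p = ⊤)
    (hR : ¬ CaseR ρ) : CaseC ρ ∨ CaseQ ρ := by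
  classical
  obtain ⟨U, hU, hUtop⟩ := exists_irred_proper ρ hR
  obtain ⟨hinf, hsup⟩ := irred_decomp ρ hirr hU hUtop
  by_cases hiso : SubrepIso ρ U (cSub U)
  case neg => exact Or.inl ⟨U, cSub U, hU, rfl, hinf, hsup, hiso⟩
  case pos =>
  right
  obtain ⟨e, he⟩ := hiso
  have hmemτ : ∀ u : U, conjC W ((e u : cSub U) : ℂ ⊗[ℝ] W) ∈ U := fun u => mem_cSub.mp (e u).2
  set τ : U → U := fun u => ⟨conjC W ((e u : cSub U) : ℂ ⊗[ℝ] W), hmemτ u⟩ with hτ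
  have τcoe : ∀ u : U, ((τ u : U) : ℂ ⊗[ℝ] W) = conjC W ((e u : cSub U) : ℂ ⊗[ℝ] W) :=
    fun u => rfl
  have τadd : ∀ a b : U, τ (a + b) = τ a + τ b := by
    intro a b
    apply Subtype.ext
    rw [Submodule.coe_add, τcoe, τcoe, τcoe, map_add e, Submodule.coe_add, map_add]
  have τsmul : ∀ (c : ℂ) (u : U), τ (c • u) = (starRingEnd ℂ c) • τ u := by
    intro c u
    apply Subtype.ext
    rw [Submodule.coe_smul, τcoe, τcoe, map_smul e, Submodule.coe_smul, conjC_smul]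
  have τzero : τ 0 = 0 := by
    have h0 : τ 0 = τ 0 + τ 0 := by rw [← τadd, add_zero]
    exact (left_eq_add.mp h0)
  have τinj : Function.Injective τ := by
    intro a b hab
    have h1 : conjC W ((e a : cSub U) : ℂ ⊗[ℝ] W) = conjC W ((e b : cSub U) : ℂ ⊗[ℝ] W) :=
      congrArg Subtype.val hab
    exact e.injective (Subtype.ext (conjC_injective h1))
  have τsurj : Function.Surjective τ := by
    intro v
    have hv : conjC W (v : ℂ ⊗[ℝ] W) ∈ cSub U :=
      mem_cSub.mpr (by rw [conjC_conjC]; exact v.2)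
    refine ⟨e.symm ⟨conjC W (v : ℂ ⊗[ℝ] W), hv⟩, ?_⟩
    apply Subtype.ext
    rw [τcoe, e.apply_symm_apply]
    exact conjC_conjC _
  have τequi : ∀ (g : G) (u : U) (hu : rhoC ρ g (u : ℂ ⊗[ℝ] W) ∈ U),
      ((τ ⟨rhoC ρ g (u : ℂ ⊗[ℝ] W), hu⟩ : U) : ℂ ⊗[ℝ] W)
        = rhoC ρ g ((τ u : U) : ℂ ⊗[ℝ] W) := by
    intro g u hu
    rw [τcoe, τcoe, he g u hu, conjC_rhoC]
  set f : U →ₗ[ℂ] U :=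
    { toFun := fun u => τ (τ u)
      map_add' := by
        intro a b
        show τ (τ (a + b)) = τ (τ a) + τ (τ b)
        rw [τadd, τadd]
      map_smul' := by
        intro c u
        show τ (τ (c • u)) = (RingHom.id ℂ) c • τ (τ u)
        rw [τsmul, τsmul]
        simp } with hf
  have fapp : ∀ u : U, f u = τ (τ u) := fun u => rfl
  have fequi : ∀ (g : G) (u : U) (hu : rhoC ρ g (u : ℂ ⊗[ℝ] W) ∈ U),
      ((f ⟨rhoC ρ g (u : ℂ ⊗[ℝ] W), hu⟩ : U) : ℂ ⊗[ℝ] W)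
        = rhoC ρ g ((f u : U) : ℂ ⊗[ℝ] W) := by
    intro g u hu
    have hm : rhoC ρ g ((τ u : U) : ℂ ⊗[ℝ] W) ∈ U := hU.2.1 g _ (τ u).2
    have h1 : τ ⟨rhoC ρ g (u : ℂ ⊗[ℝ] W), hu⟩ = ⟨rhoC ρ g ((τ u : U) : ℂ ⊗[ℝ] W), hm⟩ :=
      Subtype.ext (τequi g u hu)
    show ((τ (τ ⟨rhoC ρ g (u : ℂ ⊗[ℝ] W), hu⟩) : U) : ℂ ⊗[ℝ] W)
      = rhoC ρ g ((τ (τ u) : U) : ℂ ⊗[ℝ] W)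
    rw [h1]
    exact τequi g (τ u) hm
  obtain ⟨lam, hlam⟩ := schur_scalar ρ U hU f fequi
  have : Nontrivial U := Submodule.nontrivial_iff_ne_bot.mpr hU.1
  obtain ⟨u0, hu0⟩ := exists_ne (0 : U)
  have hτu0 : τ u0 ≠ 0 := fun h => hu0 (τinj (h.trans τzero.symm))
  have hlam0 : lam ≠ 0 := by
    intro h0
    apply hτu0
    have h1 : τ (τ u0) = 0 := by rw [← fapp, hlam, h0, zero_smul]
    exact τinj (h1.trans τzero.symm)
  have hlamreal : starRingEnd ℂ lam = lam := by
    have h1 : τ (f u0) = f (τ u0) := rfl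
    rw [hlam, hlam, τsmul] at h1
    have h2 := sub_smul (starRingEnd ℂ lam) lam (τ u0)
    rw [h1, sub_self] at h2
    rcases smul_eq_zero.mp h2 with h | h
    · exact sub_eq_zero.mp h
    · exact absurd h hτu0
  have hre : ((lam.re : ℝ) : ℂ) = lam := Complex.conj_eq_iff_re.mp hlamreal
  rcases lt_trichotomy lam.re 0 with hneg | hzero | hpos
  · -- quaternionic case
    set s : ℝ := Real.sqrt (-lam.re) with hs
    have hspos : 0 < s := Real.sqrt_pos.mpr (by linarith)
    have hss : ((s : ℝ) : ℂ) * s = -lam := by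
      have h3 : ((s * s : ℝ) : ℂ) = ((-lam.re : ℝ) : ℂ) := by
        norm_cast
        exact Real.mul_self_sqrt (by linarith)
      push_cast at h3
      rw [h3, hre]
    set t : ℂ := ((s : ℝ) : ℂ)⁻¹ with ht
    have htne : t ≠ 0 := inv_ne_zero (by exact_mod_cast hspos.ne')
    have htconj : starRingEnd ℂ t = t := by rw [ht, map_inv₀, Complex.conj_ofReal]
    have httlam : t * t * lam = -1 := by
      rw [ht, ← mul_inv, hss]
      rw [inv_neg, neg_mul, inv_mul_cancel₀ hlam0]
    set σ : U → U := fun u => t • τ u with hσ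
    have σcoe : ∀ u : U, σ u = t • τ u := fun u => rfl
    have σadd : ∀ a b : U, σ (a + b) = σ a + σ b := by
      intro a b; rw [σcoe, σcoe, σcoe, τadd, smul_add]
    have σsmul : ∀ (c : ℂ) (u : U), σ (c • u) = (starRingEnd ℂ c) • σ u := by
      intro c u; rw [σcoe, σcoe, τsmul, smul_comm]
    have σbij : Function.Bijective σ := by
      constructor
      · intro a b h
        rw [σcoe, σcoe] at h
        exact τinj (smul_right_injective U htne h)
      · intro v
        obtain ⟨u, hu⟩ := τsurj (t⁻¹ • v)
        refine ⟨u, ?_⟩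
        rw [σcoe, hu, smul_smul, mul_inv_cancel₀ htne, one_smul]
    have σequi : ∀ (g : G) (u : U) (hu : rhoC ρ g (u : ℂ ⊗[ℝ] W) ∈ U),
        ((σ ⟨rhoC ρ g (u : ℂ ⊗[ℝ] W), hu⟩ : U) : ℂ ⊗[ℝ] W)
          = rhoC ρ g ((σ u : U) : ℂ ⊗[ℝ] W) := by
      intro g u hu
      rw [σcoe, σcoe, Submodule.coe_smul, Submodule.coe_smul, τequi g u hu, map_smul]
    have σneg : ∀ u : U, σ (σ u) = -u := by
      intro u
      rw [σcoe, σcoe, τsmul, htconj, smul_smul]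
      have h4 : τ (τ u) = lam • u := by rw [← fapp, hlam]
      rw [h4, smul_smul, mul_assoc, ← mul_assoc, httlam, neg_one_smul]
    exact ⟨U, cSub U, hU, rfl, hinf, hsup, ⟨e, he⟩, σ, σadd, σsmul, σbij, σequi, σneg⟩
  · exfalso
    apply hlam0
    rw [← hre, hzero]
    simp
  · -- the "real" case is impossible
    exfalso
    set s : ℝ := Real.sqrt lam.re with hs
    have hspos : 0 < s := Real.sqrt_pos.mpr hpos
    have hss : ((s : ℝ) : ℂ) * s = lam := by
      have h3 : ((s * s : ℝ) : ℂ) = ((lam.re : ℝ) : ℂ) := by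
        norm_cast
        exact Real.mul_self_sqrt (le_of_lt hpos)
      push_cast at h3
      rw [h3, hre]
    set t : ℂ := ((s : ℝ) : ℂ)⁻¹ with ht
    have htne : t ≠ 0 := inv_ne_zero (by exact_mod_cast hspos.ne')
    have htconj : starRingEnd ℂ t = t := by rw [ht, map_inv₀, Complex.conj_ofReal]
    have httlam : t * t * lam = 1 := by
      rw [ht, ← mul_inv, hss, inv_mul_cancel₀ hlam0]
    set τ' : U → U := fun u => t • τ u with hτ'
    have τ'coe : ∀ u : U, τ' u = t • τ u := fun u => rfl
    have τ'add : ∀ a b : U, τ' (a + b) = τ' a + τ' b := by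
      intro a b; rw [τ'coe, τ'coe, τ'coe, τadd, smul_add]
    have τ'smul : ∀ (c : ℂ) (u : U), τ' (c • u) = (starRingEnd ℂ c) • τ' u := by
      intro c u; rw [τ'coe, τ'coe, τsmul, smul_comm]
    have τ'τ' : ∀ u : U, τ' (τ' u) = u := by
      intro u
      rw [τ'coe, τ'coe, τsmul, htconj, smul_smul]
      have h4 : τ (τ u) = lam • u := by rw [← fapp, hlam]
      rw [h4, smul_smul, mul_assoc, ← mul_assoc, httlam, one_smul]
    have τ'equi : ∀ (g : G) (u : U) (hu : rhoC ρ g (u : ℂ ⊗[ℝ] W) ∈ U),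
        ((τ' ⟨rhoC ρ g (u : ℂ ⊗[ℝ] W), hu⟩ : U) : ℂ ⊗[ℝ] W)
          = rhoC ρ g ((τ' u : U) : ℂ ⊗[ℝ] W) := by
      intro g u hu
      rw [τ'coe, τ'coe, Submodule.coe_smul, Submodule.coe_smul, τequi g u hu, map_smul]
    set ψ : U →ₗ[ℂ] (ℂ ⊗[ℝ] W) :=
      { toFun := fun u => conjC W ((τ' u : U) : ℂ ⊗[ℝ] W)
        map_add' := by
          intro a b
          show conjC W ((τ' (a + b) : U) : ℂ ⊗[ℝ] W)
            = conjC W ((τ' a : U) : ℂ ⊗[ℝ] W) + conjC W ((τ' b : U) : ℂ ⊗[ℝ] W)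
          rw [τ'add, Submodule.coe_add, map_add]
        map_smul' := by
          intro c u
          show conjC W ((τ' (c • u) : U) : ℂ ⊗[ℝ] W)
            = (RingHom.id ℂ) c • conjC W ((τ' u : U) : ℂ ⊗[ℝ] W)
          rw [τ'smul, Submodule.coe_smul, conjC_smul, Complex.conj_conj, RingHom.id_apply]
        } with hψ
    have ψapp : ∀ u : U, ψ u = conjC W ((τ' u : U) : ℂ ⊗[ℝ] W) := fun u => rfl
    set Y : Submodule ℂ (ℂ ⊗[ℝ] W) := LinearMap.range (U.subtype + ψ) with hY
    have hYmem : ∀ x : ℂ ⊗[ℝ] W, x ∈ Y ↔ ∃ u : U, (u : ℂ ⊗[ℝ] W) + ψ u = x := by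
      intro x
      rw [hY, LinearMap.mem_range]
      constructor
      · rintro ⟨u, hu⟩; exact ⟨u, by rw [← hu]; rfl⟩
      · rintro ⟨u, hu⟩; exact ⟨u, by rw [← hu]; rfl⟩
    have hψmem : ∀ u : U, ψ u ∈ cSub U := by
      intro u
      rw [ψapp]
      exact mem_cSub.mpr (by rw [conjC_conjC]; exact (τ' u).2)
    have hYsub : IsSubrep ρ Y := by
      intro g x hx
      obtain ⟨u, hu⟩ := (hYmem x).mp hx
      rw [← hu, map_add]
      have hm : rhoC ρ g (u : ℂ ⊗[ℝ] W) ∈ U := hU.2.1 g _ u.2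
      set u₂ : U := ⟨rhoC ρ g (u : ℂ ⊗[ℝ] W), hm⟩ with hu₂
      have hτ2 : ((τ' u₂ : U) : ℂ ⊗[ℝ] W) = rhoC ρ g ((τ' u : U) : ℂ ⊗[ℝ] W) := τ'equi g u hm
      have hψ2 : ψ u₂ = rhoC ρ g (ψ u) := by
        rw [ψapp, ψapp, hτ2, conjC_rhoC]
      refine (hYmem _).mpr ⟨u₂, ?_⟩
      rw [hψ2]
    have hYconj : ∀ x ∈ Y, conjC W x ∈ Y := by
      intro x hx
      obtain ⟨u, hu⟩ := (hYmem x).mp hx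
      rw [← hu, map_add]
      have h1 : conjC W (ψ u) = ((τ' u : U) : ℂ ⊗[ℝ] W) := by rw [ψapp, conjC_conjC]
      have h2 : ψ (τ' u) = conjC W (u : ℂ ⊗[ℝ] W) := by rw [ψapp, τ'τ']
      refine (hYmem _).mpr ⟨τ' u, ?_⟩
      rw [h2, h1, add_comm]
    rcases selfconj_bot_or_top ρ hirr Y hYsub hYconj with hb | htp
    · -- Y = ⊥ impossible
      have : Nontrivial U := Submodule.nontrivial_iff_ne_bot.mpr hU.1
      obtain ⟨u0, hu0⟩ := exists_ne (0 : U)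
      have hmem : (u0 : ℂ ⊗[ℝ] W) + ψ u0 ∈ Y := (hYmem _).mpr ⟨u0, rfl⟩
      rw [hb, Submodule.mem_bot] at hmem
      have h5 : (u0 : ℂ ⊗[ℝ] W) = -ψ u0 := eq_neg_of_add_eq_zero_left hmem
      have h6 : (u0 : ℂ ⊗[ℝ] W) ∈ cSub U := by
        rw [h5]; exact (cSub U).neg_mem (hψmem u0)
      have h7 : (u0 : ℂ ⊗[ℝ] W) ∈ U ⊓ cSub U := Submodule.mem_inf.mpr ⟨u0.2, h6⟩
      rw [hinf, Submodule.mem_bot] at h7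
      exact hu0 (Subtype.ext h7)
    · -- Y = ⊤ impossible
      obtain ⟨v0, hv0mem, hv0⟩ :=
        Submodule.exists_mem_ne_zero_of_ne_bot (cSub_ne_bot hU.1)
      have hv0Y : v0 ∈ Y := by rw [htp]; exact Submodule.mem_top
      obtain ⟨u, hu⟩ := (hYmem v0).mp hv0Y
      have h5 : (u : ℂ ⊗[ℝ] W) = v0 - ψ u := by rw [← hu]; abel
      have h6 : (u : ℂ ⊗[ℝ] W) ∈ cSub U := by
        rw [h5]; exact (cSub U).sub_mem hv0mem (hψmem u)
      have h7 : (u : ℂ ⊗[ℝ] W) ∈ U ⊓ cSub U := Submodule.mem_inf.mpr ⟨u.2, h6⟩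
      rw [hinf, Submodule.mem_bot] at h7
      have h8 : u = 0 := Subtype.ext h7
      rw [h8, map_zero] at hu
      simp at hu
      exact hv0 hu.symm

end Main

/-- For a nonzero finite-dimensional irreducible real representation `W` of
`G` admitting an invariant positive-definite symmetric bilinear form, exactly one of the
cases (R), (C), (Q) holds for the complexification `V = ℂ ⊗[ℝ] W`. -/
theorem complexification_trichotomy
    {G W : Type*} [Group G] [AddCommGroup W] [Module ℝ W]
    [FiniteDimensional ℝ W] [Nontrivial W]
    (ρ : G →* (W ≃ₗ[ℝ] W))
    (hirr : ∀ p : Submodule ℝ W, (∀ g : G, ∀ x ∈ p, ρ g x ∈ p) → p = ⊥ ∨ p = ⊤)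
    (b : W →ₗ[ℝ] W →ₗ[ℝ] ℝ)
    (hsymm : ∀ x y : W, b x y = b y x)
    (hpos : ∀ x : W, x ≠ 0 → 0 < b x x)
    (hinv : ∀ (g : G) (x y : W), b (ρ g x) (ρ g y) = b x y) :
    (CaseR ρ ∧ ¬ CaseC ρ ∧ ¬ CaseQ ρ) ∨
    (¬ CaseR ρ ∧ CaseC ρ ∧ ¬ CaseQ ρ) ∨
    (¬ CaseR ρ ∧ ¬ CaseC ρ ∧ CaseQ ρ) := by
  classical
  by_cases hR : CaseR ρ
  · left
    refine ⟨hR, ?_, ?_⟩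
    · rintro ⟨U, U', hU, hset, hinf, -⟩
      exact caseR_not_caseC_aux ρ hR hU hset hinf
    · rintro ⟨U, U', hU, hset, hinf, -⟩
      exact caseR_not_caseC_aux ρ hR hU hset hinf
  · rcases caseC_or_caseQ ρ hirr hR with hC | hQ
    · exact Or.inr (Or.inl ⟨hR, hC, fun hQ => not_caseC_and_caseQ ρ ⟨hC, hQ⟩⟩)
    · exact Or.inr (Or.inr ⟨hR, fun hC => not_caseC_and_caseQ ρ ⟨hC, hQ⟩, hQ⟩)
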